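/- Let p ≥ 2 be an integer and d' ≥ 4 an integer, let c = 1/(1 + (d'−1)^{1/(p−1)}), and let r = ((d'−1)c^p + (1−c)^p)^{1/p}. Then there exist real numbers α > 0 and l > 0 such that |α − c|^p + 2(α + c)^p + (d'−4)c^p + |lα − c|^p < r^p < 3(α + c)^p + (d'−4)c^p + |lα − c|^p. -/

import Mathlib

/-- Existence of parameters `α > 0` and `l > 0` satisfying inequality (8) of the
paper: with `c = 1/(1 + (d'-1)^(1/(p-1)))` and `r = ((d'-1) c^p + (1-c)^p)^(1/p)`,
`|α - c|^p + 2(α + c)^p + (d'-4) c^p + |lα - c|^p < r^p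
  < 3(α + c)^p + (d'-4) c^p + |lα - c|^p`. -/
theorem stmt_13 (p : ℕ) (hp : 2 ≤ p) (d' : ℕ) (hd' : 4 ≤ d') :
    let c : ℝ := 1 / (1 + ((d' : ℝ) - 1) ^ ((1 : ℝ) / ((p : ℝ) - 1)))
    let r : ℝ := (((d' : ℝ) - 1) * c ^ p + (1 - c) ^ p) ^ ((1 : ℝ) / p)
    ∃ α : ℝ, 0 < α ∧ ∃ l : ℝ, 0 < l ∧
      (|α - c| ^ p + 2 * (α + c) ^ p + ((d' : ℝ) - 4) * c ^ p + |l * α - c| ^ p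
        < r ^ p) ∧
      (r ^ p
        < 3 * (α + c) ^ p + ((d' : ℝ) - 4) * c ^ p + |l * α - c| ^ p) := by
  intro c r
  have hp0 : p ≠ 0 := by omega
  have hd4 : (4 : ℝ) ≤ (d' : ℝ) := by exact_mod_cast hd'
  have ht0 : 0 < ((d' : ℝ) - 1) ^ ((1 : ℝ) / ((p : ℝ) - 1)) :=
    Real.rpow_pos_of_pos (by linarith) _
  have hc0 : 0 < c := by
    have : 0 < 1 + ((d' : ℝ) - 1) ^ ((1 : ℝ) / ((p : ℝ) - 1)) := by linarith
    positivity
  have hc1 : c < 1 := by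
    rw [div_lt_one (by linarith)]
    linarith
  have h1c : 0 < 1 - c := by linarith
  set X : ℝ := c ^ p + (1 - c) ^ p / 3 with hXdef
  have hX0 : 0 ≤ X := by positivity
  have hXc : c ^ p < X := by
    rw [hXdef]
    have : 0 < (1 - c) ^ p / 3 := by positivity
    linarith
  set α : ℝ := X ^ ((1 : ℝ) / p) - c with hαdef
  have hXp : (X ^ ((1 : ℝ) / p)) ^ p = X := by
    rw [one_div]
    exact Real.rpow_inv_natCast_pow hX0 hp0
  have hα : 0 < α := by
    have h1 : (c ^ p : ℝ) ^ ((1 : ℝ) / p) < X ^ ((1 : ℝ) / p) :=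
      Real.rpow_lt_rpow (by positivity) hXc (by positivity)
    have h2 : (c ^ p : ℝ) ^ ((1 : ℝ) / p) = c := by
      rw [one_div]
      exact Real.pow_rpow_inv_natCast hc0.le hp0
    rw [hαdef]
    linarith [h2 ▸ h1]
  have hαc : α + c = X ^ ((1 : ℝ) / p) := by rw [hαdef]; ring
  have hαcp : (α + c) ^ p = X := by rw [hαc]; exact hXp
  have habs : |α - c| < α + c := by
    rw [abs_lt]; constructor <;> linarith
  have hfa : |α - c| ^ p < (α + c) ^ p :=
    pow_lt_pow_left₀ habs (abs_nonneg _) hp0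
  set s : ℝ := min (1 / 2) (((α + c) ^ p - |α - c| ^ p) / 2) with hsdef
  have hs0 : 0 < s := by
    apply lt_min (by norm_num)
    linarith
  have hs1 : s ≤ 1 := le_trans (min_le_left _ _) (by norm_num)
  have hsp : s ^ p ≤ s := pow_le_of_le_one hs0.le hs1 hp0
  have hsD : s ≤ ((α + c) ^ p - |α - c| ^ p) / 2 := min_le_right _ _
  refine ⟨α, hα, (c + s) / α, by positivity, ?_⟩
  have hl : (c + s) / α * α - c = s := by
    field_simp
    ring
  have habs2 : |(c + s) / α * α - c| = s := by rw [hl, abs_of_pos hs0]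
  have hM0 : 0 ≤ ((d' : ℝ) - 1) * c ^ p + (1 - c) ^ p :=
    add_nonneg (mul_nonneg (by linarith) (by positivity)) (by positivity)
  have hrp : r ^ p = ((d' : ℝ) - 1) * c ^ p + (1 - c) ^ p := by
    show ((((d' : ℝ) - 1) * c ^ p + (1 - c) ^ p) ^ ((1 : ℝ) / p)) ^ p = _
    rw [one_div]
    exact Real.rpow_inv_natCast_pow hM0 hp0
  have hsum : 3 * (α + c) ^ p = 3 * c ^ p + (1 - c) ^ p := by
    rw [hαcp, hXdef]; ring
  have hspp : 0 < s ^ p := pow_pos hs0 p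
  constructor
  · rw [habs2, hrp]
    nlinarith [hsum]
  · rw [habs2, hrp]
    nlinarith [hsum]
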